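/- Let X be a topological space that is open nested at every point and suppose the character χ(x, X) equals a fixed cardinal κ for all x ∈ X. Then for any family γ of open sets of X with |γ| < κ, the intersection ⋂γ is open in X. -/

import Mathlib

open Cardinal

/-- The character of a point `x` in a space `X`: the least cardinality of a
local base at `x`. -/
noncomputable def character (X : Type*) [TopologicalSpace X] (x : X) : Cardinal :=
  ⨅ B : {B : Set (Set X) // (∀ U ∈ B, IsOpen U ∧ x ∈ U) ∧
      (∀ U : Set X, IsOpen U → x ∈ U → ∃ V ∈ B, V ⊆ U)}, #B.1

/-- In an open nested space whose character is the same cardinal `κ` at every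
point, the intersection of any family of fewer than `κ` open sets is open. -/
theorem open_nested_inter_open
    {X : Type*} [TopologicalSpace X]
    (hnested : ∀ x : X, ∃ B : Set (Set X),
        (∀ U ∈ B, IsOpen U ∧ x ∈ U) ∧ IsChain (· ⊆ ·) B ∧
        (∀ U : Set X, IsOpen U → x ∈ U → ∃ V ∈ B, V ⊆ U))
    (κ : Cardinal) (hκ : ∀ x : X, character X x = κ)
    (γ : Set (Set X)) (hγ : ∀ U ∈ γ, IsOpen U) (hcard : #γ < κ) :
    IsOpen (⋂₀ γ) := by
  rw [isOpen_iff_mem_nhds]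
  intro x hx
  obtain ⟨B, hBopen, hBchain, hBbase⟩ := hnested x
  have hchoice : ∀ U : γ, ∃ V ∈ B, V ⊆ U.1 := fun U =>
    hBbase U.1 (hγ U.1 U.2) (hx U.1 U.2)
  choose V hVB hVsub using hchoice
  by_cases h : ∃ W ∈ B, ∀ U : γ, W ⊆ V U
  · obtain ⟨W, hWB, hW⟩ := h
    have hWsub : W ⊆ ⋂₀ γ := fun y hy U hU => hVsub ⟨U, hU⟩ (hW ⟨U, hU⟩ hy)
    exact Filter.mem_of_superset ((hBopen W hWB).1.mem_nhds (hBopen W hWB).2) hWsub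
  · exfalso
    push_neg at h
    set s : Set (Set X) := Set.range V with hs
    have hs_base : (∀ T ∈ s, IsOpen T ∧ x ∈ T) ∧
        ∀ O : Set X, IsOpen O → x ∈ O → ∃ T ∈ s, T ⊆ O := by
      constructor
      · rintro T ⟨U, rfl⟩; exact hBopen _ (hVB U)
      · intro O hO hxO
        obtain ⟨W, hWB, hWO⟩ := hBbase O hO hxO
        obtain ⟨U, hnsub⟩ := h W hWB
        have hsub : V U ⊆ W := by
          rcases hBchain.total (hVB U) hWB with h' | h'
          · exact h'
          · exact absurd h' hnsub
        exact ⟨V U, ⟨U, rfl⟩, hsub.trans hWO⟩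
    have hle : character X x ≤ #s := ciInf_le' (fun B : {B : Set (Set X) // (∀ U ∈ B, IsOpen U ∧ x ∈ U) ∧ (∀ U : Set X, IsOpen U → x ∈ U → ∃ V ∈ B, V ⊆ U)} => #B.1) ⟨s, hs_base⟩
    have hslt : #s < κ := lt_of_le_of_lt Cardinal.mk_range_le hcard
    rw [hκ x] at hle
    exact absurd (hle.trans_lt hslt) (lt_irrefl κ)
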